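/- Let H be a symmetric positive definite m × m real matrix whose largest eigenvalue is strictly less than 1, and let T : ℝ^m → ℝ^m be nonexpansive (1-Lipschitz with respect to the Euclidean norm) with at least one fixed point. For any v^0 ∈ ℝ^m, define the sequence v^{k+1} = (I − H) v^k + H T(v^k) for k ≥ 0. Then the sequence (v^k) converges to a fixed point of T. -/

import Mathlib

open Filter Finset Topology
open scoped RealInnerProductSpace

section Aux

variable {m : ℕ} [NeZero m]

/-- step lemma context -/
theorem aux_main {m : ℕ} (hm : 0 < m)
    (H : Matrix (Fin m) (Fin m) ℝ) (hH : H.PosDef)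
    (heig : ∀ i, hH.1.eigenvalues i < 1)
    (T : EuclideanSpace ℝ (Fin m) → EuclideanSpace ℝ (Fin m))
    (hT : ∀ x y, ‖T x - T y‖ ≤ ‖x - y‖)
    (hfix : ∃ w, T w = w)
    (v : ℕ → EuclideanSpace ℝ (Fin m))
    (hrec : ∀ k, v (k + 1) =
      (v k - Matrix.toEuclideanLin H (v k)) + Matrix.toEuclideanLin H (T (v k))) :
    ∃ w, T w = w ∧ Filter.Tendsto v Filter.atTop (nhds w) := by
  have : Nonempty (Fin m) := ⟨⟨0, hm⟩⟩
  set b := hH.1.eigenvectorBasis with hb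
  set lam := hH.1.eigenvalues with hlam
  set L := Matrix.toEuclideanLin H with hL
  set c : EuclideanSpace ℝ (Fin m) → Fin m → ℝ := fun x i => inner ℝ (b i) x with hc
  have lam_pos : ∀ i, 0 < lam i := fun i => hH.eigenvalues_pos i
  -- L acts diagonally on coefficients
  have hLb : ∀ i, L (b i) = lam i • b i := by
    intro i
    have h := hH.1.mulVec_eigenvectorBasis i
    rw [hL, Matrix.toEuclideanLin_apply]
    ext j
    have := congrFun h j
    simpa using this
  have hLsymm : ∀ x y, inner ℝ (L x) (y) = inner ℝ (x) (L y) := by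
    intro x y
    exact (Matrix.isHermitian_iff_isSymmetric.mp hH.1) x y
  have hcL : ∀ x i, c (L x) i = lam i * c x i := by
    intro x i
    rw [hc]
    simp only
    rw [real_inner_comm, hLsymm, real_inner_comm, hLb, inner_smul_left]
    simp [real_inner_comm]
  have hinner : ∀ x y, inner ℝ (x) (y) = ∑ i, c x i * c y i := by
    intro x y
    rw [← b.sum_inner_mul_inner x y]
    refine Finset.sum_congr rfl fun i _ => ?_
    simp only [hc]
    rw [real_inner_comm x (b i)]
  have hnorm : ∀ x : EuclideanSpace ℝ (Fin m), ‖x‖ ^ 2 = ∑ i, c x i ^ 2 := by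
    intro x
    rw [← real_inner_self_eq_norm_sq, hinner]
    exact Finset.sum_congr rfl fun i _ => (sq (c x i)).symm
  -- λmax
  set lmax := Finset.univ.sup' Finset.univ_nonempty lam with hlmax
  have hlmax_mem : ∀ i, lam i ≤ lmax := fun i => Finset.le_sup' lam (mem_univ i)
  have hlmax_pos : 0 < lmax := lt_of_lt_of_le (lam_pos (Classical.arbitrary _)) (hlmax_mem _)
  have hlmax_lt : lmax < 1 := by
    obtain ⟨i, _, hi⟩ := Finset.exists_mem_eq_sup' Finset.univ_nonempty lam
    rw [hlmax, hi]; exact heig i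
  set lmin := Finset.univ.inf' Finset.univ_nonempty lam with hlmin
  have hlmin_le : ∀ i, lmin ≤ lam i := fun i => Finset.inf'_le lam (mem_univ i)
  have hlmin_pos : 0 < lmin := by
    obtain ⟨i, _, hi⟩ := Finset.exists_mem_eq_inf' Finset.univ_nonempty lam
    rw [hlmin, hi]; exact lam_pos i
  -- the Lyapunov function
  set q : EuclideanSpace ℝ (Fin m) → ℝ := fun x => ∑ i, c x i ^ 2 / lam i with hq
  have hq_ge : ∀ x, ‖x‖ ^ 2 / lmax ≤ q x := by
    intro x
    rw [hnorm, Finset.sum_div]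
    refine Finset.sum_le_sum fun i _ => ?_
    exact div_le_div_of_nonneg_left (sq_nonneg _) (lam_pos i) (hlmax_mem i)
  have hq_le : ∀ x, q x ≤ ‖x‖ ^ 2 / lmin := by
    intro x
    rw [hnorm, Finset.sum_div]
    refine Finset.sum_le_sum fun i _ => ?_
    exact div_le_div_of_nonneg_left (sq_nonneg _) hlmin_pos (hlmin_le i)
  have hq_nonneg : ∀ x, 0 ≤ q x :=
    fun x => le_trans (div_nonneg (sq_nonneg _) hlmax_pos.le) (hq_ge x)
  -- key step inequality
  have key : ∀ w, T w = w → ∀ k,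
      q (v (k+1) - w) + (1 - lmax) * ‖T (v k) - v k‖ ^ 2 ≤ q (v k - w) := by
    intro w hw k
    set u := v k - w with hu
    set r := T (v k) - v k with hr
    have hstep : v (k+1) - w = u + L r := by
      rw [hrec k, hr, hu, map_sub]
      abel
    have hcstep : ∀ i, c (v (k+1) - w) i = c u i + lam i * c r i := by
      intro i
      rw [hstep]
      show inner ℝ (b i) (u + L r) = _
      rw [inner_add_right]
      show c u i + c (L r) i = _
      rw [hcL]
    have hq_expand : q (v (k+1) - w) = q u + 2 * inner ℝ (u) (r) + ∑ i, lam i * c r i ^ 2 := by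
      have hterm : ∀ i, c (v (k+1) - w) i ^ 2 / lam i
          = c u i ^ 2 / lam i + 2 * (c u i * c r i) + lam i * c r i ^ 2 := by
        intro i
        have hne : lam i ≠ 0 := (lam_pos i).ne'
        rw [hcstep i]
        field_simp
        ring
      calc q (v (k+1) - w) = ∑ i, c (v (k+1) - w) i ^ 2 / lam i := rfl
        _ = ∑ i, (c u i ^ 2 / lam i + 2 * (c u i * c r i) + lam i * c r i ^ 2) :=
            Finset.sum_congr rfl fun i _ => hterm i
        _ = q u + 2 * inner ℝ (u) (r) + ∑ i, lam i * c r i ^ 2 := by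
            rw [Finset.sum_add_distrib, Finset.sum_add_distrib, hinner, ← Finset.mul_sum]
    have hineq1 : 2 * inner ℝ (u) (r) ≤ -‖r‖ ^ 2 := by
      have h1 : ‖u + r‖ ≤ ‖u‖ := by
        have : u + r = T (v k) - T w := by rw [hu, hr, hw]; abel
        rw [this, hu]
        exact hT _ _
      have h2 : ‖u + r‖ ^ 2 ≤ ‖u‖ ^ 2 := pow_le_pow_left₀ (norm_nonneg _) h1 2
      have h3 := norm_add_sq_real u r
      linarith
    have hineq2 : ∑ i, lam i * c r i ^ 2 ≤ lmax * ‖r‖ ^ 2 := by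
      rw [hnorm, Finset.mul_sum]
      exact Finset.sum_le_sum fun i _ => mul_le_mul_of_nonneg_right (hlmax_mem i) (sq_nonneg _)
    rw [hq_expand]
    linarith [hineq1, hineq2]
  -- Part 2: analysis
  obtain ⟨w0, hw0⟩ := hfix
  have hQ_anti : Antitone (fun k => q (v k - w0)) := by
    refine antitone_nat_of_succ_le fun k => ?_
    nlinarith [key w0 hw0 k, sq_nonneg ‖T (v k) - v k‖, hlmax_lt]
  have hQ_bdd : BddBelow (Set.range (fun k => q (v k - w0))) :=
    ⟨0, by rintro x ⟨k, rfl⟩; exact hq_nonneg _⟩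
  have hQlim : Tendsto (fun k => q (v k - w0)) atTop (𝓝 (⨅ k, q (v k - w0))) :=
    tendsto_atTop_ciInf hQ_anti hQ_bdd
  -- residual tends to zero
  have hres : Tendsto (fun k => ‖T (v k) - v k‖) atTop (𝓝 0) := by
    have hsq : Tendsto (fun k => ‖T (v k) - v k‖ ^ 2) atTop (𝓝 0) := by
      have hub : ∀ k, ‖T (v k) - v k‖ ^ 2
          ≤ (q (v k - w0) - q (v (k+1) - w0)) / (1 - lmax) := by
        intro k
        rw [le_div_iff₀ (by linarith)]
        linarith [key w0 hw0 k]
      have hdiff : Tendsto (fun k => (q (v k - w0) - q (v (k+1) - w0)) / (1 - lmax))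
          atTop (𝓝 0) := by
        have h1 : Tendsto (fun k => q (v (k+1) - w0)) atTop (𝓝 (⨅ k, q (v k - w0))) :=
          hQlim.comp (tendsto_add_atTop_nat 1)
        have h2 := (hQlim.sub h1).div_const (1 - lmax)
        simpa using h2
      exact squeeze_zero (fun k => sq_nonneg _) hub hdiff
    have h3 := (Real.continuous_sqrt.tendsto 0).comp hsq
    have heq : (fun k => Real.sqrt (‖T (v k) - v k‖ ^ 2)) = fun k => ‖T (v k) - v k‖ :=
      funext fun k => Real.sqrt_sq (norm_nonneg _)
    have h4 : Tendsto (fun k => Real.sqrt (‖T (v k) - v k‖ ^ 2)) atTop (𝓝 0) := by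
      simpa [Function.comp_def] using h3
    rwa [heq] at h4
  -- boundedness and convergent subsequence
  have hbound : ∀ k, v k ∈ Metric.closedBall w0 (Real.sqrt (lmax * q (v 0 - w0))) := by
    intro k
    rw [Metric.mem_closedBall, dist_eq_norm]
    have h1 : ‖v k - w0‖ ^ 2 ≤ lmax * q (v 0 - w0) := by
      have h2 := hq_ge (v k - w0)
      have hQk : q (v k - w0) ≤ q (v 0 - w0) := hQ_anti (Nat.zero_le k)
      rw [div_le_iff₀ hlmax_pos] at h2
      nlinarith
    calc ‖v k - w0‖ = Real.sqrt (‖v k - w0‖ ^ 2) := (Real.sqrt_sq (norm_nonneg _)).symm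
      _ ≤ Real.sqrt (lmax * q (v 0 - w0)) := Real.sqrt_le_sqrt h1
  obtain ⟨a, -, φ, hφmono, hφlim⟩ :=
    tendsto_subseq_of_bounded Metric.isBounded_closedBall hbound
  -- the limit is a fixed point
  have hcont : Continuous T := by
    have hlip : LipschitzWith 1 T := LipschitzWith.of_dist_le_mul fun x y => by
      rw [dist_eq_norm, dist_eq_norm]; simpa using hT x y
    exact hlip.continuous
  have hTa : T a = a := by
    have h1 : Tendsto (fun j => T (v (φ j))) atTop (𝓝 (T a)) :=
      (hcont.tendsto a).comp hφlim
    have h2 : Tendsto (fun j => T (v (φ j))) atTop (𝓝 a) := by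
      have hr0 : Tendsto (fun k => T (v k) - v k) atTop (𝓝 0) :=
        tendsto_zero_iff_norm_tendsto_zero.mpr hres
      have hr1 : Tendsto (fun j => T (v (φ j)) - v (φ j)) atTop (𝓝 0) :=
        hr0.comp hφmono.tendsto_atTop
      have := hr1.add hφlim
      simpa using this
    exact tendsto_nhds_unique h1 h2
  refine ⟨a, hTa, ?_⟩
  -- Fejer argument with the fixed point a
  have hQ'_anti : Antitone (fun k => q (v k - a)) := by
    refine antitone_nat_of_succ_le fun k => ?_
    nlinarith [key a hTa k, sq_nonneg ‖T (v k) - v k‖, hlmax_lt]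
  have hQ'_bdd : BddBelow (Set.range (fun k => q (v k - a))) :=
    ⟨0, by rintro x ⟨k, rfl⟩; exact hq_nonneg _⟩
  have hQ'lim : Tendsto (fun k => q (v k - a)) atTop (𝓝 (⨅ k, q (v k - a))) :=
    tendsto_atTop_ciInf hQ'_anti hQ'_bdd
  have hQ'sub : Tendsto (fun j => q (v (φ j) - a)) atTop (𝓝 0) := by
    have h1 : Tendsto (fun j => ‖v (φ j) - a‖) atTop (𝓝 0) :=
      tendsto_iff_norm_sub_tendsto_zero.mp hφlim
    have h2 : Tendsto (fun j => ‖v (φ j) - a‖ ^ 2 / lmin) atTop (𝓝 0) := by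
      have := (h1.mul h1).div_const lmin
      simpa [sq] using this
    exact squeeze_zero (fun j => hq_nonneg _) (fun j => hq_le _) h2
  have hinf0 : (⨅ k, q (v k - a)) = 0 :=
    tendsto_nhds_unique (hQ'lim.comp hφmono.tendsto_atTop) hQ'sub
  have hQ'0 : Tendsto (fun k => q (v k - a)) atTop (𝓝 0) := hinf0 ▸ hQ'lim
  rw [tendsto_iff_norm_sub_tendsto_zero]
  have hsq : Tendsto (fun k => ‖v k - a‖ ^ 2) atTop (𝓝 0) := by
    have hub : ∀ k, ‖v k - a‖ ^ 2 ≤ lmax * q (v k - a) := by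
      intro k
      have h2 := hq_ge (v k - a)
      rw [div_le_iff₀ hlmax_pos] at h2
      linarith [mul_comm (q (v k - a)) lmax]
    have hml : Tendsto (fun k => lmax * q (v k - a)) atTop (𝓝 0) := by
      have := hQ'0.const_mul lmax
      simpa using this
    exact squeeze_zero (fun k => sq_nonneg _) hub hml
  have h3 := (Real.continuous_sqrt.tendsto 0).comp hsq
  have heq : (fun k => Real.sqrt (‖v k - a‖ ^ 2)) = fun k => ‖v k - a‖ :=
    funext fun k => Real.sqrt_sq (norm_nonneg _)
  have h4 : Tendsto (fun k => Real.sqrt (‖v k - a‖ ^ 2)) atTop (𝓝 0) := by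
    simpa [Function.comp_def] using h3
  rwa [heq] at h4

end Aux

theorem preconditioned_mann_converges {m : ℕ}
    (H : Matrix (Fin m) (Fin m) ℝ) (hH : H.PosDef)
    (heig : ∀ i, hH.1.eigenvalues i < 1)
    (T : EuclideanSpace ℝ (Fin m) → EuclideanSpace ℝ (Fin m))
    (hT : ∀ x y, ‖T x - T y‖ ≤ ‖x - y‖)
    (hfix : ∃ w, T w = w)
    (v : ℕ → EuclideanSpace ℝ (Fin m))
    (hrec : ∀ k, v (k + 1) =
      (v k - Matrix.toEuclideanLin H (v k)) + Matrix.toEuclideanLin H (T (v k))) :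
    ∃ w, T w = w ∧ Filter.Tendsto v Filter.atTop (nhds w) := by
  rcases Nat.eq_zero_or_pos m with hm | hm
  · subst hm
    obtain ⟨w, hw⟩ := hfix
    have hsub : Subsingleton (EuclideanSpace ℝ (Fin 0)) :=
      ⟨fun a b => PiLp.ext fun i => absurd i.2 (by omega)⟩
    refine ⟨w, hw, ?_⟩
    have : v = fun _ => w := funext fun k => Subsingleton.elim _ _
    rw [this]
    exact tendsto_const_nhds
  · exact aux_main hm H hH heig T hT hfix v hrec
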